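/- For any A ∈ SL(2,ℂ), the trace of A · conj(A) is at least −2; that is, tr(A · conj(A)) ∈ [−2, ∞). -/

import Mathlib

theorem trace_mul_conj_ge_neg_two (A : Matrix (Fin 2) (Fin 2) ℂ) (hA : A.det = 1) :
    ((A * A.map (starRingEnd ℂ)).trace).im = 0 ∧
      (-2 : ℝ) ≤ ((A * A.map (starRingEnd ℂ)).trace).re := by
  rw [Matrix.det_fin_two] at hA
  set a := A 0 0; set b := A 0 1; set c := A 1 0; set d := A 1 1
  have htr : (A * A.map (starRingEnd ℂ)).trace
      = a * (starRingEnd ℂ) a + b * (starRingEnd ℂ) c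
        + (c * (starRingEnd ℂ) b + d * (starRingEnd ℂ) d) := by
    simp [Matrix.trace_fin_two, Matrix.mul_apply, Fin.sum_univ_two, Matrix.map_apply]
    rfl
  rw [htr]
  have haa : a * (starRingEnd ℂ) a = (Complex.normSq a : ℂ) := Complex.mul_conj a
  have hdd : d * (starRingEnd ℂ) d = (Complex.normSq d : ℂ) := Complex.mul_conj d
  have hcb : c * (starRingEnd ℂ) b = (starRingEnd ℂ) (b * (starRingEnd ℂ) c) := by
    simp [map_mul]; ring
  constructor
  · simp only [haa, hdd, hcb, Complex.add_im, Complex.conj_im, Complex.ofReal_im,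
      Complex.mul_im, Complex.conj_re]
    ring
  · have h1 : -(‖b‖ * ‖c‖) ≤ (b * (starRingEnd ℂ) c).re := by
      have := Complex.abs_re_le_norm (b * (starRingEnd ℂ) c)
      have habs : ‖b * (starRingEnd ℂ) c‖ = ‖b‖ * ‖c‖ := by
        simp [map_mul]
      rw [habs] at this
      cases abs_le.mp this with
      | intro hl hr => exact hl
    have h2 : ‖b‖ * ‖c‖ ≤ ‖a‖ * ‖d‖ + 1 := by
      have hbc : b * c = a * d + (-1) := by linear_combination -hA
      calc ‖b‖ * ‖c‖ = ‖b * c‖ := (norm_mul _ _).symm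
        _ = ‖a * d + (-1)‖ := by rw [hbc]
        _ ≤ ‖a * d‖ + ‖(-1 : ℂ)‖ := norm_add_le _ _
        _ = ‖a‖ * ‖d‖ + 1 := by simp [map_mul]
    have h3 : 2 * (‖a‖ * ‖d‖) ≤ Complex.normSq a + Complex.normSq d := by
      have := sq_nonneg (‖a‖ - ‖d‖)
      have hna : Complex.normSq a = ‖a‖ ^ 2 := (Complex.sq_norm a).symm
      have hnd : Complex.normSq d = ‖d‖ ^ 2 := (Complex.sq_norm d).symm
      nlinarith
    simp only [haa, hdd, hcb, Complex.add_re, Complex.ofReal_re, Complex.conj_re]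
    nlinarith
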